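/- Let H = Σ_{γ=1}^{Γ} H_γ be a Hamiltonian consisting of Γ Hermitian summands, and let S_2(t) = e^{-itH_1/2} ··· e^{-itH_Γ/2} · e^{-itH_Γ/2} ··· e^{-itH_1/2} be the second-order Suzuki (Strang) formula. Then for all t ≥ 0, ‖S_2(t) − e^{-itH}‖ ≤ (t³/12) Σ_{γ1=1}^{Γ} ‖[ Σ_{γ3=γ1+1}^{Γ} H_{γ3}, [ Σ_{γ2=γ1+1}^{Γ} H_{γ2}, H_{γ1} ] ]‖ + (t³/24) Σ_{γ1=1}^{Γ} ‖[ H_{γ1}, [ Σ_{γ2=γ1+1}^{Γ} H_{γ2}, H_{γ1} ] ]‖. -/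

import Mathlib

open NormedSpace Complex intervalIntegral MeasureTheory

set_option synthInstance.maxHeartbeats 1000000
set_option maxHeartbeats 1000000
set_option maxRecDepth 4000

namespace SuzukiAux

variable {E : Type*} [NormedAddCommGroup E] [InnerProductSpace ℂ E] [FiniteDimensional ℂ E]

attribute [local instance] LieRing.ofAssociativeRing

noncomputable def normedAlgebraRatCLM : NormedAlgebra ℚ (E →L[ℂ] E) :=
  NormedAlgebra.restrictScalars ℚ ℂ _

attribute [local instance] normedAlgebraRatCLM

/-- exponential of a skew-adjoint operator has norm at most 1. -/
lemma norm_exp_skew_le_one (X : E →L[ℂ] E) (hX : star X = -X) : ‖exp X‖ ≤ 1 := by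
  set U := exp X with hU
  have hstar : star U * U = 1 := by
    rw [hU, star_exp, hX, ← exp_add_of_commute ((Commute.refl X).neg_left),
      neg_add_cancel, NormedSpace.exp_zero]
  have hiso : ∀ x : E, ‖U x‖ = ‖x‖ := by
    intro x
    have h1 : (inner ℂ ((star U * U) x) x : ℂ) = inner ℂ (U x) (U x) := by
      rw [ContinuousLinearMap.mul_apply, ContinuousLinearMap.star_eq_adjoint]
      exact ContinuousLinearMap.adjoint_inner_left U x (U x)
    rw [hstar, ContinuousLinearMap.one_apply] at h1
    rw [inner_self_eq_norm_sq_to_K, inner_self_eq_norm_sq_to_K] at h1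
    have h3 : (‖x‖)^2 = (‖U x‖)^2 := by exact_mod_cast h1
    nlinarith [norm_nonneg x, norm_nonneg (U x)]
  exact U.opNorm_le_bound zero_le_one (fun x => by rw [hiso x, one_mul])

lemma skew_neg {X : E →L[ℂ] E} (hX : star X = -X) : star (-X) = -(-X) := by
  rw [star_neg, hX]

lemma skew_real_smul (r : ℝ) {X : E →L[ℂ] E} (hX : star X = -X) :
    star (r • X) = -(r • X) := by
  rw [star_smul, star_trivial, hX, smul_neg]

lemma exp_mul_exp_neg (X : E →L[ℂ] E) : exp X * exp (-X) = 1 := by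
  rw [← exp_add_of_commute ((Commute.refl X).neg_right), add_neg_cancel, NormedSpace.exp_zero]

lemma exp_neg_mul_exp (X : E →L[ℂ] E) : exp (-X) * exp X = 1 := by
  rw [← exp_add_of_commute ((Commute.refl X).neg_left), neg_add_cancel, NormedSpace.exp_zero]

/-- conjugation by exponentials of (skew) operators does not increase the norm. -/
lemma norm_conj_le {X : E →L[ℂ] E} (hX : star X = -X) (M : E →L[ℂ] E) :
    ‖exp X * M * exp (-X)‖ ≤ ‖M‖ := by
  calc ‖exp X * M * exp (-X)‖ ≤ ‖exp X * M‖ * ‖exp (-X)‖ := norm_mul_le _ _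
    _ ≤ ‖exp X‖ * ‖M‖ * ‖exp (-X)‖ :=
        mul_le_mul_of_nonneg_right (norm_mul_le _ _) (norm_nonneg _)
    _ ≤ 1 * ‖M‖ * 1 :=
        mul_le_mul (mul_le_mul (norm_exp_skew_le_one X hX) le_rfl (norm_nonneg M) zero_le_one)
          (norm_exp_skew_le_one (-X) (skew_neg hX)) (norm_nonneg _) (by positivity)
    _ = ‖M‖ := by ring

lemma hasDerivAt_expR (X : E →L[ℂ] E) (u : ℝ) :
    HasDerivAt (fun u : ℝ => exp (u • X)) (exp (u • X) * X) u := by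
  exact hasDerivAt_exp_smul_const X u

lemma hasDerivAt_expR' (X : E →L[ℂ] E) (u : ℝ) :
    HasDerivAt (fun u : ℝ => exp (u • X)) (X * exp (u • X)) u := by
  exact hasDerivAt_exp_smul_const' X u

lemma cont_expR (X : E →L[ℂ] E) : Continuous (fun u : ℝ => exp (u • X)) :=
  continuous_iff_continuousAt.mpr fun u => (hasDerivAt_expR X u).continuousAt

lemma hasDerivAt_expR_neg (X : E →L[ℂ] E) (u : ℝ) :
    HasDerivAt (fun u : ℝ => exp (-(u • X))) (exp (-(u • X)) * (-X)) u := by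
  have h : (fun u : ℝ => exp (-(u • X))) = (fun u : ℝ => exp (u • (-X))) := by
    funext v; rw [smul_neg]
  rw [h, ← smul_neg]
  exact hasDerivAt_expR (-X) u

lemma cont_expR_neg (X : E →L[ℂ] E) : Continuous (fun u : ℝ => exp (-(u • X))) :=
  continuous_iff_continuousAt.mpr fun u => (hasDerivAt_expR_neg X u).continuousAt

/-- derivative of the conjugation `u ↦ e^{uX} C e^{-uX}`. -/
lemma hasDerivAt_conj (X C : E →L[ℂ] E) (u : ℝ) :
    HasDerivAt (fun u : ℝ => exp (u • X) * C * exp (-(u • X)))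
      (exp (u • X) * ⁅X, C⁆ * exp (-(u • X))) u := by
  have h := ((hasDerivAt_expR' X u).mul_const C).mul (hasDerivAt_expR_neg X u)
  refine h.congr_deriv ?_
  symm
  have hc : exp (-(u • X)) * X = X * exp (-(u • X)) := by
    have h0 : Commute X (-(u • X)) := ((Commute.refl X).smul_right u).neg_right
    exact (h0.exp_right).symm.eq
  have hcx : X * exp (u • X) = exp (u • X) * X :=
    (((Commute.refl X).smul_right u).exp_right).eq
  have h2 : exp (-(u • X)) * -X = -(X * exp (-(u • X))) := by
    rw [mul_neg, hc]
  rw [Ring.lie_def, h2, hcx]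
  noncomm_ring

lemma cont_conj (X C : E →L[ℂ] E) :
    Continuous (fun u : ℝ => exp (u • X) * C * exp (-(u • X))) :=
  (((cont_expR X).mul continuous_const).mul (cont_expR_neg X))

/-- First-order Taylor: `e^X C e^{-X} = C + ∫₀¹ e^{uX} [X,C] e^{-uX} du`. -/
lemma conj_taylor1 (X C : E →L[ℂ] E) :
    exp X * C * exp (-X)
      = C + ∫ u in (0:ℝ)..1, exp (u • X) * ⁅X, C⁆ * exp (-(u • X)) := by
  have hftc : (∫ u in (0:ℝ)..1, exp (u • X) * ⁅X, C⁆ * exp (-(u • X)))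
      = exp ((1:ℝ) • X) * C * exp (-((1:ℝ) • X))
        - exp ((0:ℝ) • X) * C * exp (-((0:ℝ) • X)) :=
    intervalIntegral.integral_eq_sub_of_hasDerivAt
      (fun u _ => hasDerivAt_conj X C u) ((cont_conj X ⁅X, C⁆).intervalIntegrable 0 1)
  rw [hftc]
  simp [NormedSpace.exp_zero]

/-- Second-order Taylor:
`e^X C e^{-X} = C + [X,C] + ∫₀¹ (1-u) e^{uX} [X,[X,C]] e^{-uX} du`. -/
lemma conj_taylor2 (X C : E →L[ℂ] E) :
    exp X * C * exp (-X)
      = C + ⁅X, C⁆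
        + ∫ u in (0:ℝ)..1, (1-u) • (exp (u • X) * ⁅X, ⁅X, C⁆⁆ * exp (-(u • X))) := by
  set φ : ℝ → E →L[ℂ] E := fun u => exp (u • X) * C * exp (-(u • X)) with hφ
  set ψ : ℝ → E →L[ℂ] E := fun u => exp (u • X) * ⁅X, C⁆ * exp (-(u • X)) with hψ
  have hg : ∀ u : ℝ, HasDerivAt (fun u => φ u + (1-u) • ψ u)
      ((1-u) • (exp (u • X) * ⁅X, ⁅X, C⁆⁆ * exp (-(u • X)))) u := by
    intro u
    have h1 : HasDerivAt φ (ψ u) u := hasDerivAt_conj X C u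
    have h2 : HasDerivAt ψ (exp (u • X) * ⁅X, ⁅X, C⁆⁆ * exp (-(u • X))) u :=
      hasDerivAt_conj X ⁅X, C⁆ u
    have h3 : HasDerivAt (fun u : ℝ => (1:ℝ)-u) (-1) u := by
      simpa using (hasDerivAt_id u).const_sub (1:ℝ)
    have h4 := h3.smul h2
    have h5 := h1.add h4
    refine h5.congr_deriv ?_
    symm
    simp only [neg_smul, one_smul]
    abel
  have hcont : Continuous (fun u : ℝ =>
      (1-u) • (exp (u • X) * ⁅X, ⁅X, C⁆⁆ * exp (-(u • X)))) :=
    (continuous_const.sub continuous_id).smul (cont_conj X ⁅X, ⁅X, C⁆⁆)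
  have hftc : (∫ u in (0:ℝ)..1,
        (1-u) • (exp (u • X) * ⁅X, ⁅X, C⁆⁆ * exp (-(u • X))))
      = (φ 1 + (1-(1:ℝ)) • ψ 1) - (φ 0 + (1-(0:ℝ)) • ψ 0) :=
    intervalIntegral.integral_eq_sub_of_hasDerivAt
      (fun u _ => hg u) (hcont.intervalIntegrable 0 1)
  rw [hftc, hφ, hψ]
  simp only [one_smul, zero_smul, NormedSpace.exp_zero, neg_zero, one_mul, mul_one,
    sub_self, zero_smul, sub_zero, sub_sub_cancel]
  abel

lemma norm_mul_le_one_left {a b : E →L[ℂ] E} (h : ‖a‖ ≤ 1) : ‖a * b‖ ≤ ‖b‖ :=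
  (norm_mul_le a b).trans (mul_le_of_le_one_left (norm_nonneg b) h)

lemma norm_mul_le_one_right {a b : E →L[ℂ] E} (h : ‖b‖ ≤ 1) : ‖a * b‖ ≤ ‖a‖ :=
  (norm_mul_le a b).trans (mul_le_of_le_one_right (norm_nonneg a) h)

lemma ring_key {R : Type*} [Ring R] (V W V' W' Xa Yb : R)
    (hV : V' * V = 1) (hW : W' * W = 1) (hXV : Xa * V = V * Xa) (hYW : Yb * W = W * Yb) :
    ((V * Xa * W + V * (W * Yb)) * V + V * W * (V * Xa)) - (Xa + (Yb + Xa)) * (V * W * V)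
      = ((V * Yb * V' - Yb) + (V * (W * Xa * W') * V' - Xa)) * (V * W * V) := by
  have hV1 : ∀ x : R, V' * (V * x) = x := fun x => by rw [← mul_assoc, hV, one_mul]
  have hW1 : ∀ x : R, W' * (W * x) = x := fun x => by rw [← mul_assoc, hW, one_mul]
  have hXV1 : ∀ x : R, Xa * (V * x) = V * (Xa * x) := fun x => by
    rw [← mul_assoc, hXV, mul_assoc]
  have hYW1 : ∀ x : R, Yb * (W * x) = W * (Yb * x) := fun x => by
    rw [← mul_assoc, hYW, mul_assoc]
  simp only [sub_mul, add_mul, mul_assoc, hV1, hW1, hXV, hXV1, hYW1]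
  abel

/-- Core tight bound for the two-term Strang splitting, in terms of skew generators. -/
lemma strang2_core (Xa Yb : E →L[ℂ] E) (hXs : star Xa = -Xa) (hYs : star Yb = -Yb)
    (t : ℝ) (ht : 0 ≤ t) :
    ‖exp (t • Xa) * exp (t • Yb) * exp (t • Xa) - exp (t • (Xa + (Yb + Xa)))‖
      ≤ t ^ 3 / 6 * ‖⁅Xa, ⁅Yb, Xa⁆⁆‖ + t ^ 3 / 6 * ‖⁅Yb, ⁅Yb, Xa⁆⁆‖ := by
  set Wo : E →L[ℂ] E := Xa + (Yb + Xa) with hWo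
  have hWs : star Wo = -Wo := by
    rw [hWo, star_add, star_add, hXs, hYs]; abel
  set CA := ‖⁅Xa, ⁅Yb, Xa⁆⁆‖ with hCAdef
  set CB := ‖⁅Yb, ⁅Yb, Xa⁆⁆‖ with hCBdef
  have hCA0 : 0 ≤ CA := norm_nonneg _
  have hCB0 : 0 ≤ CB := norm_nonneg _
  have hsk : ⁅Yb, Xa⁆ = -⁅Xa, Yb⁆ := neg_eq_iff_eq_neg.mp (lie_skew Xa Yb)
  have hsk' : ⁅Xa, Yb⁆ = -⁅Yb, Xa⁆ := by rw [hsk, neg_neg]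
  have hXVc : ∀ s : ℝ, Xa * exp (s • Xa) = exp (s • Xa) * Xa := fun s =>
    (((Commute.refl Xa).smul_right s).exp_right).eq
  have hYWc : ∀ s : ℝ, Yb * exp (s • Yb) = exp (s • Yb) * Yb := fun s =>
    (((Commute.refl Yb).smul_right s).exp_right).eq
  set Ss : ℝ → E →L[ℂ] E := fun s => exp (s • Xa) * exp (s • Yb) * exp (s • Xa) with hSs
  set Sd : ℝ → E →L[ℂ] E := fun s =>
    (exp (s • Xa) * Xa * exp (s • Yb) + exp (s • Xa) * (exp (s • Yb) * Yb))
        * exp (s • Xa)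
      + exp (s • Xa) * exp (s • Yb) * (exp (s • Xa) * Xa) with hSdd
  have hSderiv : ∀ s : ℝ, HasDerivAt Ss (Sd s) s := fun s =>
    ((hasDerivAt_expR Xa s).mul (hasDerivAt_expR Yb s)).mul (hasDerivAt_expR Xa s)
  set Rdef : ℝ → E →L[ℂ] E := fun s =>
    (exp (s • Xa) * Yb * exp (-(s • Xa)) - Yb)
      + (exp (s • Xa) * (exp (s • Yb) * Xa * exp (-(s • Yb))) * exp (-(s • Xa)) - Xa)
    with hRdef
  have key : ∀ s : ℝ, Sd s - Wo * Ss s = Rdef s * Ss s := by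
    intro s
    have h := ring_key (exp (s • Xa)) (exp (s • Yb)) (exp (-(s • Xa)))
      (exp (-(s • Yb))) Xa Yb (exp_neg_mul_exp _) (exp_neg_mul_exp _) (hXVc s) (hYWc s)
    rw [hSdd, hSs, hRdef, hWo]
    exact h
  -- pointwise bound on the defect
  have hRbound : ∀ s : ℝ, ‖Rdef s‖ ≤ s ^ 2 / 2 * CA + s ^ 2 / 2 * CB := by
    intro s
    have e1 := conj_taylor2 (s • Xa) Yb
    have e2 := conj_taylor2 (s • Yb) Xa
    have e3 := conj_taylor1 (s • Xa) ⁅s • Yb, Xa⁆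
    have e4 : exp (s • Xa) * Xa * exp (-(s • Xa)) = Xa := by
      rw [← hXVc s, mul_assoc, exp_mul_exp_neg, mul_one]
    set I1 := ∫ u in (0:ℝ)..1, (1-u) •
      (exp (u • (s • Xa)) * ⁅s • Xa, ⁅s • Xa, Yb⁆⁆ * exp (-(u • (s • Xa)))) with hI1
    set I2 := ∫ u in (0:ℝ)..1, (1-u) •
      (exp (u • (s • Yb)) * ⁅s • Yb, ⁅s • Yb, Xa⁆⁆ * exp (-(u • (s • Yb)))) with hI2
    set I3 := ∫ u in (0:ℝ)..1,
      exp (u • (s • Xa)) * ⁅s • Xa, ⁅s • Yb, Xa⁆⁆ * exp (-(u • (s • Xa))) with hI3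
    have hLL : ⁅s • Xa, Yb⁆ + ⁅s • Yb, Xa⁆ = 0 := by
      rw [smul_lie, smul_lie, hsk, smul_neg, add_neg_cancel]
    have hRdec : Rdef s = (I1 + I3) + exp (s • Xa) * I2 * exp (-(s • Xa)) := by
      rw [hRdef]
      calc (exp (s • Xa) * Yb * exp (-(s • Xa)) - Yb)
            + (exp (s • Xa) * (exp (s • Yb) * Xa * exp (-(s • Yb))) * exp (-(s • Xa)) - Xa)
          = (Yb + ⁅s • Xa, Yb⁆ + I1 - Yb)
            + (exp (s • Xa) * (Xa + ⁅s • Yb, Xa⁆ + I2) * exp (-(s • Xa)) - Xa) := by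
            rw [← e1, ← e2]
        _ = (Yb + ⁅s • Xa, Yb⁆ + I1 - Yb)
            + ((exp (s • Xa) * Xa * exp (-(s • Xa))
                + exp (s • Xa) * ⁅s • Yb, Xa⁆ * exp (-(s • Xa))
                + exp (s • Xa) * I2 * exp (-(s • Xa))) - Xa) := by
            rw [mul_add, mul_add, add_mul, add_mul]
        _ = (Yb + ⁅s • Xa, Yb⁆ + I1 - Yb)
            + ((Xa + (⁅s • Yb, Xa⁆ + I3) + exp (s • Xa) * I2 * exp (-(s • Xa))) - Xa) := by
            rw [e4, ← e3]
        _ = (⁅s • Xa, Yb⁆ + ⁅s • Yb, Xa⁆)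
            + ((I1 + I3) + exp (s • Xa) * I2 * exp (-(s • Xa))) := by abel
        _ = (I1 + I3) + exp (s • Xa) * I2 * exp (-(s • Xa)) := by rw [hLL, zero_add]
    have habs2 : ∀ a : ℝ, |a| * (|a| * CB) = a ^ 2 * CB := fun a => by
      rw [← mul_assoc, abs_mul_abs_self, ← pow_two]
    have habs2' : ∀ a : ℝ, |a| * (|a| * CA) = a ^ 2 * CA := fun a => by
      rw [← mul_assoc, abs_mul_abs_self, ← pow_two]
    -- bound on I2 part
    have hb2 : ‖exp (s • Xa) * I2 * exp (-(s • Xa))‖ ≤ s ^ 2 / 2 * CB := by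
      refine le_trans (norm_conj_le (skew_real_smul s hXs) I2) ?_
      have hN2 : ‖⁅s • Yb, ⁅s • Yb, Xa⁆⁆‖ = s ^ 2 * CB := by
        rw [smul_lie s Yb Xa, lie_smul, smul_lie, norm_smul s (s • ⁅Yb, ⁅Yb, Xa⁆⁆),
          norm_smul s ⁅Yb, ⁅Yb, Xa⁆⁆, Real.norm_eq_abs, ← hCBdef, habs2]
      have hpt : ∀ u ∈ Set.uIoc (0:ℝ) 1, ‖(1-u) •
          (exp (u • (s • Yb)) * ⁅s • Yb, ⁅s • Yb, Xa⁆⁆ * exp (-(u • (s • Yb))))‖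
          ≤ (1-u) * (s ^ 2 * CB) := by
        intro u hu
        rw [Set.uIoc_of_le zero_le_one] at hu
        have h1u : (0:ℝ) ≤ 1 - u := by linarith [hu.2]
        have h1 : ‖exp (u • (s • Yb)) * ⁅s • Yb, ⁅s • Yb, Xa⁆⁆ * exp (-(u • (s • Yb)))‖
            ≤ s ^ 2 * CB :=
          le_trans (norm_conj_le (skew_real_smul u (skew_real_smul s hYs)) _) (le_of_eq hN2)
        rw [norm_smul ((1:ℝ)-u) (exp (u • (s • Yb)) * ⁅s • Yb, ⁅s • Yb, Xa⁆⁆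
          * exp (-(u • (s • Yb)))), Real.norm_eq_abs, _root_.abs_of_nonneg h1u]
        exact mul_le_mul_of_nonneg_left h1 h1u
      have h12 : (∫ u in (0:ℝ)..1, (1-u)) = 1/2 := by
        rw [intervalIntegral.integral_comp_sub_left (fun x => x) 1]
        rw [integral_id]
        norm_num
      have hintg : (∫ u in (0:ℝ)..1, (1-u) * (s ^ 2 * CB)) = s ^ 2 / 2 * CB := by
        rw [intervalIntegral.integral_mul_const, h12]
        ring
      calc ‖I2‖ ≤ |∫ u in (0:ℝ)..1, (1-u) * (s ^ 2 * CB)| := by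
            rw [hI2]
            exact intervalIntegral.norm_integral_le_abs_of_norm_le
              ((ae_restrict_mem measurableSet_uIoc).mono hpt)
              (((continuous_const.sub continuous_id).mul continuous_const).intervalIntegrable 0 1)
        _ = s ^ 2 / 2 * CB := by
            rw [hintg, _root_.abs_of_nonneg (mul_nonneg (by positivity) hCB0)]
    -- bound on I1 + I3
    have hb13 : ‖I1 + I3‖ ≤ s ^ 2 / 2 * CA := by
      have hN3 : ⁅s • Xa, ⁅s • Yb, Xa⁆⁆ = -⁅s • Xa, ⁅s • Xa, Yb⁆⁆ := by
        calc ⁅s • Xa, ⁅s • Yb, Xa⁆⁆ = ⁅s • Xa, s • ⁅Yb, Xa⁆⁆ := by rw [smul_lie s Yb Xa]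
          _ = ⁅s • Xa, s • (-⁅Xa, Yb⁆)⁆ := by rw [hsk]
          _ = -⁅s • Xa, s • ⁅Xa, Yb⁆⁆ := by rw [smul_neg, lie_neg]
          _ = -⁅s • Xa, ⁅s • Xa, Yb⁆⁆ := by rw [smul_lie s Xa Yb]
      have hN1 : ‖⁅s • Xa, ⁅s • Xa, Yb⁆⁆‖ = s ^ 2 * CA := by
        rw [smul_lie s Xa Yb, lie_smul, smul_lie, norm_smul s (s • ⁅Xa, ⁅Xa, Yb⁆⁆),
          norm_smul s ⁅Xa, ⁅Xa, Yb⁆⁆, Real.norm_eq_abs]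
        rw [show ⁅Xa, ⁅Xa, Yb⁆⁆ = -⁅Xa, ⁅Yb, Xa⁆⁆ by rw [hsk', lie_neg]]
        rw [norm_neg, ← hCAdef, habs2']
      have hfint : IntervalIntegrable (fun u : ℝ => (1-u) •
          (exp (u • (s • Xa)) * ⁅s • Xa, ⁅s • Xa, Yb⁆⁆ * exp (-(u • (s • Xa))))) volume 0 1 :=
        ((continuous_const.sub continuous_id).smul (cont_conj (s • Xa) _)).intervalIntegrable 0 1
      have hgint : IntervalIntegrable (fun u : ℝ =>
          exp (u • (s • Xa)) * ⁅s • Xa, ⁅s • Yb, Xa⁆⁆ * exp (-(u • (s • Xa)))) volume 0 1 :=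
        (cont_conj (s • Xa) _).intervalIntegrable 0 1
      have hadd : I1 + I3 = ∫ u in (0:ℝ)..1,
          ((1-u) • (exp (u • (s • Xa)) * ⁅s • Xa, ⁅s • Xa, Yb⁆⁆ * exp (-(u • (s • Xa))))
            + exp (u • (s • Xa)) * ⁅s • Xa, ⁅s • Yb, Xa⁆⁆ * exp (-(u • (s • Xa)))) := by
        rw [hI1, hI3, intervalIntegral.integral_add hfint hgint]
      have hpt : ∀ u ∈ Set.uIoc (0:ℝ) 1,
          ‖(1-u) • (exp (u • (s • Xa)) * ⁅s • Xa, ⁅s • Xa, Yb⁆⁆ * exp (-(u • (s • Xa))))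
            + exp (u • (s • Xa)) * ⁅s • Xa, ⁅s • Yb, Xa⁆⁆ * exp (-(u • (s • Xa)))‖
          ≤ u * (s ^ 2 * CA) := by
        intro u hu
        rw [Set.uIoc_of_le zero_le_one] at hu
        set Z := exp (u • (s • Xa)) * ⁅s • Xa, ⁅s • Xa, Yb⁆⁆ * exp (-(u • (s • Xa))) with hZ
        have hZ3 : exp (u • (s • Xa)) * ⁅s • Xa, ⁅s • Yb, Xa⁆⁆ * exp (-(u • (s • Xa)))
            = -Z := by rw [hN3, hZ, mul_neg, neg_mul]
        have hcomb : (1-u) • Z + -Z = (-u) • Z := by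
          calc (1-u) • Z + -Z = (1-u) • Z - (1:ℝ) • Z := by
                rw [one_smul]; exact (sub_eq_add_neg _ _).symm
            _ = ((1-u) - 1) • Z := (sub_smul _ _ _).symm
            _ = (-u) • Z := by norm_num
        rw [hZ3, hcomb]
        have hZle : ‖Z‖ ≤ s ^ 2 * CA :=
          le_trans (norm_conj_le (skew_real_smul u (skew_real_smul s hXs)) _) (le_of_eq hN1)
        rw [norm_smul (-u) Z, Real.norm_eq_abs, abs_neg, _root_.abs_of_nonneg (le_of_lt hu.1)]
        exact mul_le_mul_of_nonneg_left hZle (le_of_lt hu.1)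
      have hintg : (∫ u in (0:ℝ)..1, u * (s ^ 2 * CA)) = s ^ 2 / 2 * CA := by
        rw [intervalIntegral.integral_mul_const, integral_id]
        norm_num; ring
      calc ‖I1 + I3‖ ≤ |∫ u in (0:ℝ)..1, u * (s ^ 2 * CA)| := by
            rw [hadd]
            exact intervalIntegral.norm_integral_le_abs_of_norm_le
              ((ae_restrict_mem measurableSet_uIoc).mono hpt)
              ((continuous_id.mul continuous_const).intervalIntegrable 0 1)
        _ = s ^ 2 / 2 * CA := by
            rw [hintg, _root_.abs_of_nonneg (mul_nonneg (by positivity) hCA0)]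
    calc ‖Rdef s‖ = ‖(I1 + I3) + exp (s • Xa) * I2 * exp (-(s • Xa))‖ := by rw [hRdec]
      _ ≤ ‖I1 + I3‖ + ‖exp (s • Xa) * I2 * exp (-(s • Xa))‖ := norm_add_le _ _
      _ ≤ s ^ 2 / 2 * CA + s ^ 2 / 2 * CB := add_le_add hb13 hb2
  -- outer integral representation
  set g : ℝ → E →L[ℂ] E := fun s => exp (t • Wo) * (exp (-(s • Wo)) * Ss s) with hgdef
  set Gd : ℝ → E →L[ℂ] E := fun s =>
    exp (t • Wo) * (exp (-(s • Wo)) * (-Wo) * Ss s + exp (-(s • Wo)) * Sd s) with hGd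
  have hgderiv : ∀ s : ℝ, HasDerivAt g (Gd s) s := fun s =>
    ((hasDerivAt_expR_neg Wo s).mul (hSderiv s)).const_mul _
  have contSs : Continuous Ss :=
    ((cont_expR Xa).mul (cont_expR Yb)).mul (cont_expR Xa)
  have contSd : Continuous Sd :=
    (((((cont_expR Xa).mul continuous_const).mul (cont_expR Yb)).add
      ((cont_expR Xa).mul ((cont_expR Yb).mul continuous_const))).mul (cont_expR Xa)).add
      (((cont_expR Xa).mul (cont_expR Yb)).mul ((cont_expR Xa).mul continuous_const))
  have contGd : Continuous Gd :=
    continuous_const.mul ((((cont_expR_neg Wo).mul continuous_const).mul contSs).add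
      ((cont_expR_neg Wo).mul contSd))
  have hftc : (∫ s in (0:ℝ)..t, Gd s) = g t - g 0 :=
    intervalIntegral.integral_eq_sub_of_hasDerivAt (fun s _ => hgderiv s)
      (contGd.intervalIntegrable 0 t)
  have hgt : g t = Ss t := by
    rw [hgdef]
    show exp (t • Wo) * (exp (-(t • Wo)) * Ss t) = Ss t
    rw [← mul_assoc, exp_mul_exp_neg, one_mul]
  have hg0 : g 0 = exp (t • Wo) := by
    rw [hgdef]
    show exp (t • Wo) * (exp (-((0:ℝ) • Wo)) * Ss 0) = exp (t • Wo)
    rw [hSs]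
    simp [NormedSpace.exp_zero]
  have hGd_bound : ∀ s : ℝ, ‖Gd s‖ ≤ s ^ 2 * ((CA + CB) / 2) := by
    intro s
    have hre : Gd s = exp (t • Wo) * (exp (-(s • Wo)) * (Rdef s * Ss s)) := by
      rw [hGd]
      have h1 : exp (-(s • Wo)) * (-Wo) * Ss s + exp (-(s • Wo)) * Sd s
          = exp (-(s • Wo)) * (Sd s - Wo * Ss s) := by
        rw [mul_sub, mul_assoc, neg_mul, mul_neg]
        abel
      show exp (t • Wo) * (exp (-(s • Wo)) * (-Wo) * Ss s + exp (-(s • Wo)) * Sd s)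
          = exp (t • Wo) * (exp (-(s • Wo)) * (Rdef s * Ss s))
      rw [h1, key s]
    rw [hre]
    have hu1 : ‖exp (t • Wo)‖ ≤ 1 := norm_exp_skew_le_one _ (skew_real_smul t hWs)
    have hu2 : ‖exp (-(s • Wo))‖ ≤ 1 := norm_exp_skew_le_one _ (skew_neg (skew_real_smul s hWs))
    have hSs1 : ‖Ss s‖ ≤ 1 := by
      rw [hSs]
      refine le_trans (norm_mul_le_one_right (norm_exp_skew_le_one _ (skew_real_smul s hXs))) ?_
      exact le_trans (norm_mul_le_one_right (norm_exp_skew_le_one _ (skew_real_smul s hYs)))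
        (norm_exp_skew_le_one _ (skew_real_smul s hXs))
    calc ‖exp (t • Wo) * (exp (-(s • Wo)) * (Rdef s * Ss s))‖
        ≤ ‖exp (-(s • Wo)) * (Rdef s * Ss s)‖ := norm_mul_le_one_left hu1
      _ ≤ ‖Rdef s * Ss s‖ := norm_mul_le_one_left hu2
      _ ≤ ‖Rdef s‖ := norm_mul_le_one_right hSs1
      _ ≤ s ^ 2 / 2 * CA + s ^ 2 / 2 * CB := hRbound s
      _ = s ^ 2 * ((CA + CB) / 2) := by ring
  have hmain : ‖Ss t - exp (t • Wo)‖ ≤ |∫ s in (0:ℝ)..t, s ^ 2 * ((CA + CB) / 2)| := by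
    rw [← hgt, ← hg0, ← hftc]
    exact intervalIntegral.norm_integral_le_abs_of_norm_le
      ((ae_restrict_mem measurableSet_uIoc).mono (fun s _ => hGd_bound s))
      (((continuous_id.pow 2).mul continuous_const).intervalIntegrable 0 t)
  have hval : (∫ s in (0:ℝ)..t, s ^ 2 * ((CA + CB) / 2)) = t ^ 3 / 3 * ((CA + CB) / 2) := by
    rw [intervalIntegral.integral_mul_const, integral_pow]
    norm_num
  have hfin : ‖Ss t - exp (t • Wo)‖ ≤ t ^ 3 / 6 * CA + t ^ 3 / 6 * CB := by
    refine le_trans hmain ?_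
    rw [hval, _root_.abs_of_nonneg (mul_nonneg (by positivity) (by linarith))]
    exact le_of_eq (by ring)
  exact hfin

/-- the two-term tight Strang bound with Hermitian operators. -/
lemma strang2 (A B : E →L[ℂ] E) (hA : IsSelfAdjoint A) (hB : IsSelfAdjoint B)
    (t : ℝ) (ht : 0 ≤ t) :
    ‖exp ((-(Complex.I * t) / 2) • A) * exp ((-(Complex.I * t)) • B)
        * exp ((-(Complex.I * t) / 2) • A) - exp ((-(Complex.I * t)) • (A + B))‖
      ≤ t ^ 3 / 12 * ‖⁅B, ⁅B, A⁆⁆‖ + t ^ 3 / 24 * ‖⁅A, ⁅B, A⁆⁆‖ := by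
  have hXs : star ((-Complex.I/2 : ℂ) • A) = -((-Complex.I/2 : ℂ) • A) := by
    rw [star_smul, hA.star_eq, show star (-Complex.I/2 : ℂ) = -(-Complex.I/2) by
      rw [Complex.star_def, map_div₀, map_neg, Complex.conj_I, map_ofNat]; ring, neg_smul]
  have hYs : star ((-Complex.I : ℂ) • B) = -((-Complex.I : ℂ) • B) := by
    rw [star_smul, hB.star_eq, show star (-Complex.I : ℂ) = -(-Complex.I) by
      rw [Complex.star_def, map_neg, Complex.conj_I], neg_smul]
  have hcore := strang2_core ((-Complex.I/2 : ℂ) • A) ((-Complex.I : ℂ) • B) hXs hYs t ht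
  have hsc : ∀ (z : ℂ) (M : E →L[ℂ] E), t • (z • M) = ((t:ℂ) * z) • M := fun z M => by
    rw [← smul_assoc, Complex.real_smul]
  have e1 : t • ((-Complex.I/2 : ℂ) • A) = (-(Complex.I * t) / 2) • A := by
    rw [hsc]; congr 1; ring
  have e2 : t • ((-Complex.I : ℂ) • B) = (-(Complex.I * t)) • B := by
    rw [hsc]; congr 1; ring
  have e3 : t • ((-Complex.I/2 : ℂ) • A + ((-Complex.I : ℂ) • B + (-Complex.I/2 : ℂ) • A))
      = (-(Complex.I * t)) • (A + B) := by
    rw [show (-Complex.I/2 : ℂ) • A + ((-Complex.I : ℂ) • B + (-Complex.I/2 : ℂ) • A)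
        = (-Complex.I : ℂ) • (A + B) from by
      rw [smul_add, show ((-Complex.I : ℂ)) • A = (-Complex.I/2 : ℂ) • A + (-Complex.I/2 : ℂ) • A
        from by rw [← add_smul]; norm_num]
      abel]
    rw [hsc]; congr 1; ring
  rw [e1, e2, e3] at hcore
  have hlie : ∀ (c d e : ℂ) (P Q R : E →L[ℂ] E),
      ⁅c • P, ⁅d • Q, e • R⁆⁆ = (c*(d*e)) • ⁅P, ⁅Q, R⁆⁆ := fun c d e P Q R => by
    simp only [smul_lie, lie_smul, smul_smul]; congr 1; ring
  have hCA : ‖⁅(-Complex.I/2 : ℂ) • A, ⁅(-Complex.I : ℂ) • B, (-Complex.I/2 : ℂ) • A⁆⁆‖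
      = 1/4 * ‖⁅A, ⁅B, A⁆⁆‖ := by
    rw [hlie, show ((-Complex.I/2:ℂ)) * ((-Complex.I) * (-Complex.I/2)) = Complex.I/4 from by
      linear_combination (-Complex.I/4) * Complex.I_sq,
      norm_smul (Complex.I/4 : ℂ) ⁅A, ⁅B, A⁆⁆,
      show ‖(Complex.I/4 : ℂ)‖ = 1/4 from by simp]
  have hCB : ‖⁅(-Complex.I : ℂ) • B, ⁅(-Complex.I : ℂ) • B, (-Complex.I/2 : ℂ) • A⁆⁆‖
      = 1/2 * ‖⁅B, ⁅B, A⁆⁆‖ := by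
    rw [hlie, show ((-Complex.I:ℂ)) * ((-Complex.I) * (-Complex.I/2)) = Complex.I/2 from by
      linear_combination (-Complex.I/2) * Complex.I_sq,
      norm_smul (Complex.I/2 : ℂ) ⁅B, ⁅B, A⁆⁆,
      show ‖(Complex.I/2 : ℂ)‖ = 1/2 from by simp]
  rw [hCA, hCB] at hcore
  exact le_trans hcore (le_of_eq (by ring))

lemma sum_shift {M : Type*} [AddCommMonoid M] (f : ℕ → M) (a b : ℕ) :
    ∑ γ ∈ Finset.Icc (a+1) (b+1), f γ = ∑ γ ∈ Finset.Icc a b, f (γ+1) := by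
  rw [← Finset.map_add_right_Icc, Finset.sum_map]
  rfl

lemma main_aux (Γ : ℕ) (Hop : ℕ → E →L[ℂ] E) (hHop : ∀ γ, IsSelfAdjoint (Hop γ))
    (t : ℝ) (ht : 0 ≤ t) :
    ‖((List.range Γ).map fun m => exp ((-(Complex.I * t) / 2) • Hop (m + 1))).prod *
        ((List.range Γ).map fun m => exp ((-(Complex.I * t) / 2) • Hop (Γ - m))).prod -
        exp ((-(Complex.I * t)) • (∑ γ ∈ Finset.Icc 1 Γ, Hop γ))‖
      ≤ t ^ 3 / 12 * ∑ γ₁ ∈ Finset.Icc 1 Γ, ‖⁅∑ γ₃ ∈ Finset.Icc (γ₁ + 1) Γ, Hop γ₃,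
            ⁅∑ γ₂ ∈ Finset.Icc (γ₁ + 1) Γ, Hop γ₂, Hop γ₁⁆⁆‖
        + t ^ 3 / 24 * ∑ γ₁ ∈ Finset.Icc 1 Γ, ‖⁅Hop γ₁,
            ⁅∑ γ₂ ∈ Finset.Icc (γ₁ + 1) Γ, Hop γ₂, Hop γ₁⁆⁆‖ := by
  induction Γ generalizing Hop with
  | zero =>
    simp [NormedSpace.exp_zero]
  | succ Γ ih =>
    have hIH := ih (fun n => Hop (n+1)) (fun γ => hHop (γ+1))
    simp only [] at hIH
    have hskewc : star ((-(Complex.I * t) / 2) • Hop 1) = -((-(Complex.I * t) / 2) • Hop 1) := by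
      rw [star_smul, (hHop 1).star_eq, show star (-(Complex.I * t)/2 : ℂ)
        = -(-(Complex.I * t)/2) by
        rw [Complex.star_def, map_div₀, map_neg, map_mul, Complex.conj_I,
          Complex.conj_ofReal, map_ofNat]; ring,
        neg_smul]
    have he1 : ‖exp ((-(Complex.I * t) / 2) • Hop 1)‖ ≤ 1 :=
      norm_exp_skew_le_one _ hskewc
    -- split products
    have hP : ((List.range (Γ+1)).map fun m =>
          exp ((-(Complex.I * t) / 2) • Hop (m + 1))).prod
        = exp ((-(Complex.I * t) / 2) • Hop 1) *
          ((List.range Γ).map fun m => exp ((-(Complex.I * t) / 2) • Hop (m + 1 + 1))).prod := by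
      rw [List.range_succ_eq_map, List.map_cons, List.prod_cons, List.map_map]
      rfl
    have hQ : ((List.range (Γ+1)).map fun m =>
          exp ((-(Complex.I * t) / 2) • Hop (Γ + 1 - m))).prod
        = ((List.range Γ).map fun m => exp ((-(Complex.I * t) / 2) • Hop (Γ - m + 1))).prod *
          exp ((-(Complex.I * t) / 2) • Hop 1) := by
      rw [List.range_succ, List.map_append, List.prod_append]
      congr 1
      · refine congrArg List.prod (List.map_congr_left fun m hm => ?_)
        rw [List.mem_range] at hm
        rw [show Γ + 1 - m = Γ - m + 1 by omega]
      · simp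
    have hsum : (∑ γ ∈ Finset.Icc 1 (Γ+1), Hop γ)
        = Hop 1 + ∑ γ ∈ Finset.Icc 1 Γ, Hop (γ+1) := by
      rw [show Finset.Icc 1 (Γ+1) = insert 1 (Finset.Icc 2 (Γ+1)) from by
          ext x; simp [Finset.mem_Icc]; omega,
        Finset.sum_insert (by simp),
        show Finset.Icc 2 (Γ+1) = Finset.Icc (1+1) (Γ+1) from by norm_num,
        sum_shift]
    have hBsa : IsSelfAdjoint (∑ γ ∈ Finset.Icc 1 Γ, Hop (γ+1)) := by
      show star _ = _
      rw [star_sum]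
      exact Finset.sum_congr rfl fun i _ => (hHop (i+1)).star_eq
    -- the two-term step bound
    have hstep := strang2 (Hop 1) (∑ γ ∈ Finset.Icc 1 Γ, Hop (γ+1)) (hHop 1) hBsa t ht
    -- sum splits on the RHS
    have hS1 : (∑ γ₁ ∈ Finset.Icc 1 (Γ+1), ‖⁅∑ γ₃ ∈ Finset.Icc (γ₁ + 1) (Γ+1), Hop γ₃,
            ⁅∑ γ₂ ∈ Finset.Icc (γ₁ + 1) (Γ+1), Hop γ₂, Hop γ₁⁆⁆‖)
        = ‖⁅∑ γ ∈ Finset.Icc 1 Γ, Hop (γ+1), ⁅∑ γ ∈ Finset.Icc 1 Γ, Hop (γ+1), Hop 1⁆⁆‖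
          + ∑ γ₁ ∈ Finset.Icc 1 Γ, ‖⁅∑ γ₃ ∈ Finset.Icc (γ₁ + 1) Γ, Hop (γ₃+1),
              ⁅∑ γ₂ ∈ Finset.Icc (γ₁ + 1) Γ, Hop (γ₂+1), Hop (γ₁+1)⁆⁆‖ := by
      rw [show Finset.Icc 1 (Γ+1) = insert 1 (Finset.Icc 2 (Γ+1)) from by
          ext x; simp [Finset.mem_Icc]; omega,
        Finset.sum_insert (by simp)]
      congr 1
      · rw [show (1:ℕ) + 1 = 1 + 1 from rfl, sum_shift Hop 1 Γ]
      · rw [show Finset.Icc 2 (Γ+1) = Finset.Icc (1+1) (Γ+1) from by norm_num, sum_shift]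
        exact Finset.sum_congr rfl fun γ₁ _ => by rw [sum_shift Hop (γ₁+1) Γ]
    have hS2 : (∑ γ₁ ∈ Finset.Icc 1 (Γ+1), ‖⁅Hop γ₁,
            ⁅∑ γ₂ ∈ Finset.Icc (γ₁ + 1) (Γ+1), Hop γ₂, Hop γ₁⁆⁆‖)
        = ‖⁅Hop 1, ⁅∑ γ ∈ Finset.Icc 1 Γ, Hop (γ+1), Hop 1⁆⁆‖
          + ∑ γ₁ ∈ Finset.Icc 1 Γ, ‖⁅Hop (γ₁+1),
              ⁅∑ γ₂ ∈ Finset.Icc (γ₁ + 1) Γ, Hop (γ₂+1), Hop (γ₁+1)⁆⁆‖ := by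
      rw [show Finset.Icc 1 (Γ+1) = insert 1 (Finset.Icc 2 (Γ+1)) from by
          ext x; simp [Finset.mem_Icc]; omega,
        Finset.sum_insert (by simp)]
      congr 1
      · rw [sum_shift Hop 1 Γ]
      · rw [show Finset.Icc 2 (Γ+1) = Finset.Icc (1+1) (Γ+1) from by norm_num, sum_shift]
        exact Finset.sum_congr rfl fun γ₁ _ => by rw [sum_shift Hop (γ₁+1) Γ]
    -- assemble
    rw [hP, hQ, hsum, hS1, hS2]
    set e := exp ((-(Complex.I * t) / 2) • Hop 1) with hedef
    set P' := ((List.range Γ).map fun m => exp ((-(Complex.I * t) / 2) • Hop (m + 1 + 1))).prod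
      with hPdef
    set Q' := ((List.range Γ).map fun m => exp ((-(Complex.I * t) / 2) • Hop (Γ - m + 1))).prod
      with hQdef
    set B := ∑ γ ∈ Finset.Icc 1 Γ, Hop (γ+1) with hBdef
    have hdecomp : e * P' * (Q' * e) - exp ((-(Complex.I * t)) • (Hop 1 + B))
        = e * (P' * Q' - exp ((-(Complex.I * t)) • B)) * e
          + (e * exp ((-(Complex.I * t)) • B) * e
              - exp ((-(Complex.I * t)) • (Hop 1 + B))) := by
      noncomm_ring
    have hconj : ‖e * (P' * Q' - exp ((-(Complex.I * t)) • B)) * e‖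
        ≤ ‖P' * Q' - exp ((-(Complex.I * t)) • B)‖ :=
      le_trans (norm_mul_le_one_right he1) (norm_mul_le_one_left he1)
    calc ‖e * P' * (Q' * e) - exp ((-(Complex.I * t)) • (Hop 1 + B))‖
        ≤ ‖e * (P' * Q' - exp ((-(Complex.I * t)) • B)) * e‖
          + ‖e * exp ((-(Complex.I * t)) • B) * e
              - exp ((-(Complex.I * t)) • (Hop 1 + B))‖ := by
          rw [hdecomp]; exact norm_add_le _ _
      _ ≤ ‖P' * Q' - exp ((-(Complex.I * t)) • B)‖
          + (t ^ 3 / 12 * ‖⁅B, ⁅B, Hop 1⁆⁆‖ + t ^ 3 / 24 * ‖⁅Hop 1, ⁅B, Hop 1⁆⁆‖) :=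
          add_le_add hconj hstep
      _ ≤ (t ^ 3 / 12 * ∑ γ₁ ∈ Finset.Icc 1 Γ, ‖⁅∑ γ₃ ∈ Finset.Icc (γ₁ + 1) Γ, Hop (γ₃+1),
              ⁅∑ γ₂ ∈ Finset.Icc (γ₁ + 1) Γ, Hop (γ₂+1), Hop (γ₁+1)⁆⁆‖
            + t ^ 3 / 24 * ∑ γ₁ ∈ Finset.Icc 1 Γ, ‖⁅Hop (γ₁+1),
              ⁅∑ γ₂ ∈ Finset.Icc (γ₁ + 1) Γ, Hop (γ₂+1), Hop (γ₁+1)⁆⁆‖)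
          + (t ^ 3 / 12 * ‖⁅B, ⁅B, Hop 1⁆⁆‖ + t ^ 3 / 24 * ‖⁅Hop 1, ⁅B, Hop 1⁆⁆‖) := by
          exact add_le_add_left hIH _
      _ = t ^ 3 / 12 * (‖⁅B, ⁅B, Hop 1⁆⁆‖
            + ∑ γ₁ ∈ Finset.Icc 1 Γ, ‖⁅∑ γ₃ ∈ Finset.Icc (γ₁ + 1) Γ, Hop (γ₃+1),
              ⁅∑ γ₂ ∈ Finset.Icc (γ₁ + 1) Γ, Hop (γ₂+1), Hop (γ₁+1)⁆⁆‖)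
          + t ^ 3 / 24 * (‖⁅Hop 1, ⁅B, Hop 1⁆⁆‖
            + ∑ γ₁ ∈ Finset.Icc 1 Γ, ‖⁅Hop (γ₁+1),
              ⁅∑ γ₂ ∈ Finset.Icc (γ₁ + 1) Γ, Hop (γ₂+1), Hop (γ₁+1)⁆⁆‖) := by ring

end SuzukiAux

open NormedSpace

/-- **Tight error bound for the second-order Suzuki (Strang) formula with `Γ` Hermitian terms**
(Proposition 10 of Childs et al., Prop. 2 in the paper).
The formula is `S₂(t) = e^{-itH_1/2} ⋯ e^{-itH_Γ/2} ⋅ e^{-itH_Γ/2} ⋯ e^{-itH_1/2}`. -/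
theorem suzuki2_tight_error_bound
    {E : Type*} [NormedAddCommGroup E] [InnerProductSpace ℂ E] [FiniteDimensional ℂ E]
    (Γ : ℕ) (Hop : ℕ → E →L[ℂ] E) (hHop : ∀ γ, IsSelfAdjoint (Hop γ))
    (H : E →L[ℂ] E) (hH : H = ∑ γ ∈ Finset.Icc 1 Γ, Hop γ) :
    ∀ t : ℝ, 0 ≤ t →
      ‖((List.range Γ).map fun m => exp ((-(Complex.I * t) / 2) • Hop (m + 1))).prod *
          ((List.range Γ).map fun m => exp ((-(Complex.I * t) / 2) • Hop (Γ - m))).prod -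
          exp ((-(Complex.I * t)) • H)‖
        ≤ t ^ 3 / 12 *
            ∑ γ₁ ∈ Finset.Icc 1 Γ,
              ‖⁅∑ γ₃ ∈ Finset.Icc (γ₁ + 1) Γ, Hop γ₃,
                  ⁅∑ γ₂ ∈ Finset.Icc (γ₁ + 1) Γ, Hop γ₂, Hop γ₁⁆⁆‖
          + t ^ 3 / 24 *
            ∑ γ₁ ∈ Finset.Icc 1 Γ,
              ‖⁅Hop γ₁, ⁅∑ γ₂ ∈ Finset.Icc (γ₁ + 1) Γ, Hop γ₂, Hop γ₁⁆⁆‖ := by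
  intro t ht
  rw [hH]
  exact SuzukiAux.main_aux Γ Hop hHop t ht
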